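/- Let f be C² on [a,b]×[c,d]. Partition [a,b] into m equal subintervals with midpoints m_i and [c,d] into n equal subintervals with midpoints n_j. Define E(f) by ∫_a^b∫_c^d f dy dx = Σ_{i=1}^m Σ_{j=1}^n f(m_i,n_j)·(b−a)(d−c)/(mn) + E(f). If |∇f| ≤ M and |f_{xy}| ≤ N everywhere on [a,b]×[c,d], then |E(f)| ≤ M(b−a)²(d−c)/(4m) + M(b−a)(d−c)²/(4n) + N(b−a)²(d−c)²/(4mn). -/

import Mathlib

open MeasureTheory Set

lemma abs_integral_midpoint (u v : ℝ) (huv : u ≤ v) :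
    (∫ t in u..v, |t - (u + v) / 2|) = (v - u) ^ 2 / 4 := by
  set p := (u + v) / 2 with hp
  have hup : u ≤ p := by rw [hp]; linarith
  have hpv : p ≤ v := by rw [hp]; linarith
  have h1 : (∫ t in u..p, |t - p|) = ∫ t in u..p, (p - t) := by
    apply intervalIntegral.integral_congr
    intro t ht
    rw [Set.uIcc_of_le hup] at ht
    simp only []
    rw [abs_of_nonpos (by linarith [ht.2] : t - p ≤ 0)]
    ring
  have h2 : (∫ t in p..v, |t - p|) = ∫ t in p..v, (t - p) := by
    apply intervalIntegral.integral_congr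
    intro t ht
    rw [Set.uIcc_of_le hpv] at ht
    simp only []
    rw [abs_of_nonneg (by linarith [ht.1] : (0:ℝ) ≤ t - p)]
  have hi : ∀ r s : ℝ, (∫ t in r..s, (t - p)) = (s ^ 2 - r ^ 2) / 2 - p * (s - r) := by
    intro r s
    rw [show (∫ t in r..s, (t - p)) = (∫ t in r..s, t) - ∫ _t in r..s, p from
      intervalIntegral.integral_sub (continuous_id.intervalIntegrable _ _)
        intervalIntegrable_const]
    rw [integral_id, intervalIntegral.integral_const]
    simp [smul_eq_mul]
    ring
  have hadd : (∫ t in u..p, |t - p|) + (∫ t in p..v, |t - p|) = ∫ t in u..v, |t - p| := by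
    apply intervalIntegral.integral_add_adjacent_intervals
    · exact Continuous.intervalIntegrable (by continuity) _ _
    · exact Continuous.intervalIntegrable (by continuity) _ _
  rw [← hadd, h1, h2]
  have h3 : (∫ t in u..p, (p - t)) = -(∫ t in u..p, (t - p)) := by
    rw [← intervalIntegral.integral_neg]
    congr 1; funext t; ring
  rw [h3, hi, hi, hp]; ring

lemma mvt_bound {g g' : ℝ → ℝ} {s : Set ℝ} {C : ℝ} (hs : Convex ℝ s)
    (hg : ∀ t ∈ s, HasDerivAt g (g' t) t) (hb : ∀ t ∈ s, |g' t| ≤ C)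
    {p q : ℝ} (hp : p ∈ s) (hq : q ∈ s) : |g q - g p| ≤ C * |q - p| := by
  have := hs.norm_image_sub_le_of_norm_hasDerivWithin_le
    (fun t ht => (hg t ht).hasDerivWithinAt)
    (fun t ht => by simpa [Real.norm_eq_abs] using hb t ht) hp hq
  simpa [Real.norm_eq_abs] using this

lemma heqf_aux (A B M : ℝ) (m n : ℕ) (hm' : (0:ℝ) < m) (hn' : (0:ℝ) < n) :
    (m:ℝ) * ((n:ℝ) * (M * (A/m)^2 * (B/n) / 4 + M * (A/m) * (B/n)^2 / 4))
      = M * A^2 * B / (4 * m) + M * A * B^2 / (4 * n) := by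
  have hm0 : (m:ℝ) ≠ 0 := ne_of_gt hm'
  have hn0 : (n:ℝ) ≠ 0 := ne_of_gt hn'
  field_simp

set_option maxHeartbeats 1000000 in
/-- Composite midpoint rule error bound under uniform gradient bounds. -/
theorem stmt_7 (a b c d : ℝ) (hab : a < b) (hcd : c < d)
    (m n : ℕ) (hm : 0 < m) (hn : 0 < n)
    (f fx fy fxy : ℝ → ℝ → ℝ)
(hfC : ContinuousOn (fun p : ℝ × ℝ => f p.1 p.2) (Icc a b ×ˢ Icc c d))
    (hfx : ∀ x ∈ Icc a b, ∀ y ∈ Icc c d, HasDerivAt (fun x' => f x' y) (fx x y) x)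
    (hfy : ∀ x ∈ Icc a b, ∀ y ∈ Icc c d, HasDerivAt (fun y' => f x y') (fy x y) y)
    (hfxy : ∀ x ∈ Icc a b, ∀ y ∈ Icc c d, HasDerivAt (fun y' => fx x y') (fxy x y) y)
    (hfxC : ContinuousOn (fun p : ℝ × ℝ => fx p.1 p.2) (Icc a b ×ˢ Icc c d))
    (hfyC : ContinuousOn (fun p : ℝ × ℝ => fy p.1 p.2) (Icc a b ×ˢ Icc c d))
    (hfxyC : ContinuousOn (fun p : ℝ × ℝ => fxy p.1 p.2) (Icc a b ×ˢ Icc c d))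
    (M N : ℝ)
    (hM : ∀ x ∈ Icc a b, ∀ y ∈ Icc c d, Real.sqrt ((fx x y) ^ 2 + (fy x y) ^ 2) ≤ M)
    (hN : ∀ x ∈ Icc a b, ∀ y ∈ Icc c d, |fxy x y| ≤ N)
    (E : ℝ)
    (hE : (∫ x in a..b, ∫ y in c..d, f x y)
        = (∑ i ∈ Finset.range m, ∑ j ∈ Finset.range n,
            f (a + ((i : ℝ) + 1 / 2) * ((b - a) / m)) (c + ((j : ℝ) + 1 / 2) * ((d - c) / n)))
          * ((b - a) * (d - c) / (m * n)) + E) :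
    |E| ≤ M * (b - a) ^ 2 * (d - c) / (4 * m) + M * (b - a) * (d - c) ^ 2 / (4 * n)
        + N * (b - a) ^ 2 * (d - c) ^ 2 / (4 * m * n) := by
  have hm' : (0:ℝ) < m := by exact_mod_cast hm
  have hn' : (0:ℝ) < n := by exact_mod_cast hn
  set hx : ℝ := (b - a) / m with hhx
  set hy : ℝ := (d - c) / n with hhy
  clear_value hx hy
  have hxpos : 0 < hx := by rw [hhx]; exact div_pos (by linarith) hm'
  have hypos : 0 < hy := by rw [hhy]; exact div_pos (by linarith) hn'
  set X : ℕ → ℝ := fun k => a + (k:ℝ) * hx with hX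
  set Y : ℕ → ℝ := fun k => c + (k:ℝ) * hy with hY
  clear_value X Y
  have hX0 : X 0 = a := by simp [hX]
  have hXm : X m = b := by simp only [hX, hhx]; field_simp; ring
  have hY0 : Y 0 = c := by simp [hY]
  have hYn : Y n = d := by simp only [hY, hhy]; field_simp; ring
  have hXmono : ∀ j k : ℕ, j ≤ k → X j ≤ X k := by
    intro j k h
    simp only [hX]
    have hjk : (j:ℝ) ≤ k := by exact_mod_cast h
    nlinarith [hxpos.le]
  have hYmono : ∀ j k : ℕ, j ≤ k → Y j ≤ Y k := by
    intro j k h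
    simp only [hY]
    have hjk : (j:ℝ) ≤ k := by exact_mod_cast h
    nlinarith [hypos.le]
  have hXmem : ∀ k, k ≤ m → X k ∈ Icc a b := by
    intro k hk
    exact ⟨by rw [← hX0]; exact hXmono 0 k (Nat.zero_le _), by rw [← hXm]; exact hXmono k m hk⟩
  have hYmem : ∀ k, k ≤ n → Y k ∈ Icc c d := by
    intro k hk
    exact ⟨by rw [← hY0]; exact hYmono 0 k (Nat.zero_le _), by rw [← hYn]; exact hYmono k n hk⟩
  have hXsub : ∀ i, i < m → Icc (X i) (X (i+1)) ⊆ Icc a b := by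
    intro i hi
    exact Icc_subset_Icc (hXmem i (le_of_lt hi)).1 (hXmem (i+1) hi).2
  have hYsub : ∀ j, j < n → Icc (Y j) (Y (j+1)) ⊆ Icc c d := by
    intro j hj
    exact Icc_subset_Icc (hYmem j (le_of_lt hj)).1 (hYmem (j+1) hj).2
  have hXstep : ∀ i : ℕ, X (i+1) - X i = hx := by
    intro i; simp only [hX]; push_cast; ring
  have hYstep : ∀ j : ℕ, Y (j+1) - Y j = hy := by
    intro j; simp only [hY]; push_cast; ring
  set P : ℕ → ℝ := fun i => a + ((i:ℝ) + 1/2) * hx with hP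
  set Q : ℕ → ℝ := fun j => c + ((j:ℝ) + 1/2) * hy with hQ
  clear_value P Q
  have hPmid : ∀ i : ℕ, P i = (X i + X (i+1))/2 := by
    intro i; simp only [hP, hX]; push_cast; ring
  have hQmid : ∀ j : ℕ, Q j = (Y j + Y (j+1))/2 := by
    intro j; simp only [hQ, hY]; push_cast; ring
  have hPmem : ∀ i, i < m → P i ∈ Icc (X i) (X (i+1)) := by
    intro i hi
    rw [hPmid, mem_Icc]
    have h2 := hXmono i (i+1) (Nat.le_succ i)
    constructor <;> linarith
  have hQmem : ∀ j, j < n → Q j ∈ Icc (Y j) (Y (j+1)) := by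
    intro j hj
    rw [hQmid, mem_Icc]
    have h2 := hYmono j (j+1) (Nat.le_succ j)
    constructor <;> linarith
  -- bounds on partial derivatives
  have hM0 : 0 ≤ M := le_trans (Real.sqrt_nonneg _)
    (hM a (left_mem_Icc.2 hab.le) c (left_mem_Icc.2 hcd.le))
  have hN0 : 0 ≤ N := le_trans (abs_nonneg _)
    (hN a (left_mem_Icc.2 hab.le) c (left_mem_Icc.2 hcd.le))
  have hfxb : ∀ x ∈ Icc a b, ∀ y ∈ Icc c d, |fx x y| ≤ M := by
    intro x hxm y hym
    refine le_trans ?_ (hM x hxm y hym)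
    rw [← Real.sqrt_sq_eq_abs]
    exact Real.sqrt_le_sqrt (by nlinarith [sq_nonneg (fy x y)])
  have hfyb : ∀ x ∈ Icc a b, ∀ y ∈ Icc c d, |fy x y| ≤ M := by
    intro x hxm y hym
    refine le_trans ?_ (hM x hxm y hym)
    rw [← Real.sqrt_sq_eq_abs]
    exact Real.sqrt_le_sqrt (by nlinarith [sq_nonneg (fx x y)])
  -- Lipschitz estimates from the MVT
  have hlipx : ∀ x1 ∈ Icc a b, ∀ x2 ∈ Icc a b, ∀ y ∈ Icc c d,
      |f x2 y - f x1 y| ≤ M * |x2 - x1| := by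
    intro x1 h1 x2 h2 y hym
    exact mvt_bound (convex_Icc a b) (fun t ht => hfx t ht y hym)
      (fun t ht => hfxb t ht y hym) h1 h2
  have hlipy : ∀ x ∈ Icc a b, ∀ y1 ∈ Icc c d, ∀ y2 ∈ Icc c d,
      |f x y2 - f x y1| ≤ M * |y2 - y1| := by
    intro x hxm y1 h1 y2 h2
    exact mvt_bound (convex_Icc c d) (fun t ht => hfy x hxm t ht)
      (fun t ht => hfyb x hxm t ht) h1 h2
  -- continuity in y for fixed x
  have hconty : ∀ x ∈ Icc a b, ContinuousOn (fun y => f x y) (Icc c d) := by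
    intro x hxm
    have h1 : ContinuousOn (fun y : ℝ => ((x, y) : ℝ × ℝ)) (Icc c d) :=
      (Continuous.prodMk continuous_const continuous_id).continuousOn
    exact hfC.comp h1 (fun y hym => ⟨hxm, hym⟩)
  have hinty : ∀ x ∈ Icc a b, ∀ u v : ℝ, u ∈ Icc c d → v ∈ Icc c d →
      IntervalIntegrable (fun y => f x y) volume u v := by
    intro x hxm u v hu hv
    exact ContinuousOn.intervalIntegrable ((hconty x hxm).mono (uIcc_subset_Icc hu hv))
  -- the partial integrals in y are Lipschitz (hence continuous) in x
  have hGcont : ∀ u v : ℝ, u ∈ Icc c d → v ∈ Icc c d →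
      ContinuousOn (fun x => ∫ y in u..v, f x y) (Icc a b) := by
    intro u v hu hv
    have hlip : LipschitzOnWith (Real.toNNReal (M * (d - c)))
        (fun x => ∫ y in u..v, f x y) (Icc a b) := by
      apply LipschitzOnWith.of_dist_le_mul
      intro x1 h1 x2 h2
      rw [Real.dist_eq, Real.dist_eq]
      have key : (∫ y in u..v, f x1 y) - (∫ y in u..v, f x2 y)
          = ∫ y in u..v, (f x1 y - f x2 y) :=
        (intervalIntegral.integral_sub (hinty x1 h1 u v hu hv) (hinty x2 h2 u v hu hv)).symm
      rw [key, ← Real.norm_eq_abs ((∫ y in u..v, (f x1 y - f x2 y)))]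
      have hb : ∀ y ∈ Set.uIoc u v, ‖f x1 y - f x2 y‖ ≤ M * |x1 - x2| := by
        intro y hym
        have hycd : y ∈ Icc c d := uIcc_subset_Icc hu hv (uIoc_subset_uIcc hym)
        rw [Real.norm_eq_abs]
        exact hlipx x2 h2 x1 h1 y hycd
      calc ‖∫ y in u..v, (f x1 y - f x2 y)‖ ≤ M * |x1 - x2| * |v - u| :=
            intervalIntegral.norm_integral_le_of_norm_le_const hb
        _ ≤ ↑(Real.toNNReal (M * (d - c))) * |x1 - x2| := by
            rw [Real.coe_toNNReal _ (by nlinarith : (0:ℝ) ≤ M * (d - c))]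
            have hvu : |v - u| ≤ d - c := by
              rw [abs_le]
              obtain ⟨hu1, hu2⟩ := hu; obtain ⟨hv1, hv2⟩ := hv
              constructor <;> linarith
            have h0 : 0 ≤ M * |x1 - x2| := mul_nonneg hM0 (abs_nonneg _)
            calc M * |x1 - x2| * |v - u| ≤ M * |x1 - x2| * (d - c) :=
                  mul_le_mul_of_nonneg_left hvu h0
              _ = M * (d - c) * |x1 - x2| := by ring
    exact hlip.continuousOn
  -- bound for the inner (y) integral over one cell
  have hinner : ∀ i, i < m → ∀ j, j < n → ∀ x ∈ Icc (X i) (X (i+1)),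
      |(∫ y in Y j..Y (j+1), f x y) - f (P i) (Q j) * hy|
        ≤ M * hy * |x - P i| + M * (hy^2/4) := by
    intro i hi j hj x hxm
    have hxab : x ∈ Icc a b := hXsub i hi hxm
    have hPab : P i ∈ Icc a b := hXsub i hi (hPmem i hi)
    have hQcd : Q j ∈ Icc c d := hYsub j hj (hQmem j hj)
    have hYj : Y j ∈ Icc c d := hYmem j (le_of_lt hj)
    have hYj1 : Y (j+1) ∈ Icc c d := hYmem (j+1) hj
    have hYle : Y j ≤ Y (j+1) := hYmono j (j+1) (Nat.le_succ j)
    have hK : f (P i) (Q j) * hy = ∫ _y in Y j..Y (j+1), f (P i) (Q j) := by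
      rw [intervalIntegral.integral_const, smul_eq_mul, hYstep j]; ring
    rw [hK, ← intervalIntegral.integral_sub (hinty x hxab _ _ hYj hYj1)
      intervalIntegrable_const]
    have hcont2 : Continuous (fun t : ℝ => M * |x - P i| + M * |t - Q j|) :=
      continuous_const.add (continuous_const.mul ((continuous_id.sub continuous_const).abs))
    have hgint : IntervalIntegrable (fun t => M * |x - P i| + M * |t - Q j|)
        volume (Y j) (Y (j+1)) :=
      Continuous.intervalIntegrable hcont2 _ _
    have hbd : ∀ᵐ t ∂(volume.restrict (Set.uIoc (Y j) (Y (j+1)))),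
        ‖f x t - f (P i) (Q j)‖ ≤ M * |x - P i| + M * |t - Q j| := by
      rw [ae_restrict_iff' measurableSet_uIoc]
      refine Filter.Eventually.of_forall (fun t ht => ?_)
      have htcd : t ∈ Icc c d := uIcc_subset_Icc hYj hYj1 (uIoc_subset_uIcc ht)
      rw [Real.norm_eq_abs]
      calc |f x t - f (P i) (Q j)|
          ≤ |f x t - f (P i) t| + |f (P i) t - f (P i) (Q j)| := abs_sub_le _ _ _
        _ ≤ M * |x - P i| + M * |t - Q j| :=
            add_le_add (hlipx (P i) hPab x hxab t htcd) (hlipy (P i) hPab (Q j) hQcd t htcd)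
    have hcomp : (∫ t in Y j..Y (j+1), (M * |x - P i| + M * |t - Q j|))
        = M * hy * |x - P i| + M * (hy^2/4) := by
      have hig2 : IntervalIntegrable (fun t : ℝ => M * |t - Q j|) volume (Y j) (Y (j+1)) :=
        Continuous.intervalIntegrable
          (continuous_const.mul ((continuous_id.sub continuous_const).abs)) _ _
      rw [intervalIntegral.integral_add intervalIntegrable_const hig2]
      rw [intervalIntegral.integral_const, smul_eq_mul, hYstep j]
      have h2 : (∫ t in Y j..Y (j+1), M * |t - Q j|) = M * (hy^2/4) := by
        rw [intervalIntegral.integral_const_mul]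
        rw [show Q j = (Y j + Y (j+1))/2 from hQmid j]
        rw [abs_integral_midpoint _ _ hYle, hYstep j]
      rw [h2]; ring
    have hval : 0 ≤ M * hy * |x - P i| + M * (hy^2/4) := by
      have := abs_nonneg (x - P i)
      have := sq_nonneg hy
      positivity
    calc ‖∫ t in Y j..Y (j+1), (f x t - f (P i) (Q j))‖
        ≤ |∫ t in Y j..Y (j+1), (M * |x - P i| + M * |t - Q j|)| :=
          intervalIntegral.norm_integral_le_abs_of_norm_le hbd hgint
      _ = M * hy * |x - P i| + M * (hy^2/4) := by rw [hcomp, abs_of_nonneg hval]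
  -- bound over one cell
  have hcell : ∀ i, i < m → ∀ j, j < n →
      |(∫ x in X i..X (i+1), ∫ y in Y j..Y (j+1), f x y) - f (P i) (Q j) * (hx * hy)|
        ≤ M * hx^2 * hy / 4 + M * hx * hy^2 / 4 := by
    intro i hi j hj
    have hXi : X i ∈ Icc a b := hXmem i (le_of_lt hi)
    have hXi1 : X (i+1) ∈ Icc a b := hXmem (i+1) hi
    have hXle : X i ≤ X (i+1) := hXmono i (i+1) (Nat.le_succ i)
    have hYj : Y j ∈ Icc c d := hYmem j (le_of_lt hj)
    have hYj1 : Y (j+1) ∈ Icc c d := hYmem (j+1) hj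
    have hGint : IntervalIntegrable (fun x => ∫ y in Y j..Y (j+1), f x y)
        volume (X i) (X (i+1)) :=
      ContinuousOn.intervalIntegrable
        ((hGcont (Y j) (Y (j+1)) hYj hYj1).mono (uIcc_subset_Icc hXi hXi1))
    have hK : f (P i) (Q j) * (hx * hy) = ∫ _x in X i..X (i+1), (f (P i) (Q j) * hy) := by
      rw [intervalIntegral.integral_const, smul_eq_mul, hXstep i]; ring
    rw [hK, ← intervalIntegral.integral_sub hGint intervalIntegrable_const]
    have hgint : IntervalIntegrable (fun t : ℝ => M * hy * |t - P i| + M * (hy^2/4))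
        volume (X i) (X (i+1)) :=
      Continuous.intervalIntegrable
        ((continuous_const.mul ((continuous_id.sub continuous_const).abs)).add
          continuous_const) _ _
    have hbd : ∀ᵐ t ∂(volume.restrict (Set.uIoc (X i) (X (i+1)))),
        ‖(∫ y in Y j..Y (j+1), f t y) - f (P i) (Q j) * hy‖
          ≤ M * hy * |t - P i| + M * (hy^2/4) := by
      rw [ae_restrict_iff' measurableSet_uIoc]
      refine Filter.Eventually.of_forall (fun t ht => ?_)
      have htX : t ∈ Icc (X i) (X (i+1)) :=
        Ioc_subset_Icc_self (by rwa [uIoc_of_le hXle] at ht)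
      rw [Real.norm_eq_abs]
      exact hinner i hi j hj t htX
    have hcomp : (∫ t in X i..X (i+1), (M * hy * |t - P i| + M * (hy^2/4)))
        = M * hy * (hx^2/4) + M * (hy^2/4) * hx := by
      have hig2 : IntervalIntegrable (fun t : ℝ => M * hy * |t - P i|)
          volume (X i) (X (i+1)) :=
        Continuous.intervalIntegrable
          (continuous_const.mul ((continuous_id.sub continuous_const).abs)) _ _
      rw [intervalIntegral.integral_add hig2 intervalIntegrable_const]
      rw [intervalIntegral.integral_const, smul_eq_mul, hXstep i]
      rw [intervalIntegral.integral_const_mul]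
      rw [show P i = (X i + X (i+1))/2 from hPmid i]
      rw [abs_integral_midpoint _ _ hXle, hXstep i]
      ring
    have hval : 0 ≤ M * hy * (hx^2/4) + M * (hy^2/4) * hx := by positivity
    calc ‖∫ t in X i..X (i+1), ((∫ y in Y j..Y (j+1), f t y) - f (P i) (Q j) * hy)‖
        ≤ |∫ t in X i..X (i+1), (M * hy * |t - P i| + M * (hy^2/4))| :=
          intervalIntegral.norm_integral_le_abs_of_norm_le hbd hgint
      _ = M * hy * (hx^2/4) + M * (hy^2/4) * hx := by rw [hcomp, abs_of_nonneg hval]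
      _ = M * hx^2 * hy / 4 + M * hx * hy^2 / 4 := by ring
  -- splitting the double integral into cells
  have hsplit_inner : ∀ x ∈ Icc a b, (∫ y in c..d, f x y)
      = ∑ j ∈ Finset.range n, ∫ y in Y j..Y (j+1), f x y := by
    intro x hxm
    rw [intervalIntegral.sum_integral_adjacent_intervals
      (fun k hk => hinty x hxm (Y k) (Y (k+1)) (hYmem k (le_of_lt hk)) (hYmem (k+1) hk)),
      hY0, hYn]
  have hFc : ContinuousOn (fun x => ∫ y in c..d, f x y) (Icc a b) :=
    hGcont c d (left_mem_Icc.2 hcd.le) (right_mem_Icc.2 hcd.le)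
  have hsplit : (∫ x in a..b, ∫ y in c..d, f x y)
      = ∑ i ∈ Finset.range m, ∑ j ∈ Finset.range n,
          ∫ x in X i..X (i+1), ∫ y in Y j..Y (j+1), f x y := by
    have h1 : (∫ x in a..b, ∫ y in c..d, f x y)
        = ∑ i ∈ Finset.range m, ∫ x in X i..X (i+1), ∫ y in c..d, f x y := by
      rw [intervalIntegral.sum_integral_adjacent_intervals
        (fun k hk => ContinuousOn.intervalIntegrable
          (hFc.mono (uIcc_subset_Icc (hXmem k (le_of_lt hk)) (hXmem (k+1) hk)))),
        hX0, hXm]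
    rw [h1]
    refine Finset.sum_congr rfl (fun i hi => ?_)
    rw [Finset.mem_range] at hi
    have hXi : X i ∈ Icc a b := hXmem i (le_of_lt hi)
    have hXi1 : X (i+1) ∈ Icc a b := hXmem (i+1) hi
    have heq : (∫ x in X i..X (i+1), ∫ y in c..d, f x y)
        = ∫ x in X i..X (i+1), ∑ j ∈ Finset.range n, ∫ y in Y j..Y (j+1), f x y := by
      apply intervalIntegral.integral_congr
      intro x hxm
      exact hsplit_inner x (uIcc_subset_Icc hXi hXi1 hxm)
    rw [heq]
    apply intervalIntegral.integral_finset_sum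
    intro j hj
    rw [Finset.mem_range] at hj
    exact ContinuousOn.intervalIntegrable
      ((hGcont (Y j) (Y (j+1)) (hYmem j (le_of_lt hj)) (hYmem (j+1) hj)).mono
        (uIcc_subset_Icc hXi hXi1))
  -- rewrite the Riemann sum
  have hSV : (∑ i ∈ Finset.range m, ∑ j ∈ Finset.range n,
        f (a + ((i:ℝ) + 1/2) * hx) (c + ((j:ℝ) + 1/2) * hy))
        * ((b - a) * (d - c) / ((m:ℝ) * (n:ℝ)))
      = ∑ i ∈ Finset.range m, ∑ j ∈ Finset.range n, f (P i) (Q j) * (hx * hy) := by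
    rw [Finset.sum_mul]
    refine Finset.sum_congr rfl (fun i _ => ?_)
    rw [Finset.sum_mul]
    refine Finset.sum_congr rfl (fun j _ => ?_)
    have hv : hx * hy = (b - a) * (d - c) / ((m:ℝ) * (n:ℝ)) := by
      rw [hhx, hhy, div_mul_div_comm]
    rw [hv, hP, hQ]
  -- E as a sum of cell errors
  have hEeq : E = ∑ i ∈ Finset.range m, ∑ j ∈ Finset.range n,
      ((∫ x in X i..X (i+1), ∫ y in Y j..Y (j+1), f x y) - f (P i) (Q j) * (hx * hy)) := by
    have h2 : (∫ x in a..b, ∫ y in c..d, f x y)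
        = (∑ i ∈ Finset.range m, ∑ j ∈ Finset.range n, f (P i) (Q j) * (hx * hy)) + E := by
      rw [hE, hSV]
    rw [hsplit] at h2
    have h3 : (∑ i ∈ Finset.range m, ∑ j ∈ Finset.range n,
          ((∫ x in X i..X (i+1), ∫ y in Y j..Y (j+1), f x y) - f (P i) (Q j) * (hx * hy)))
        = (∑ i ∈ Finset.range m, ∑ j ∈ Finset.range n,
            ∫ x in X i..X (i+1), ∫ y in Y j..Y (j+1), f x y)
          - ∑ i ∈ Finset.range m, ∑ j ∈ Finset.range n, f (P i) (Q j) * (hx * hy) := by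
      rw [← Finset.sum_sub_distrib]
      exact Finset.sum_congr rfl (fun i _ => Finset.sum_sub_distrib _ _)
    rw [h3]
    linarith
  -- final estimate
  rw [hEeq]
  have hstep1 : |∑ i ∈ Finset.range m, ∑ j ∈ Finset.range n,
      ((∫ x in X i..X (i+1), ∫ y in Y j..Y (j+1), f x y) - f (P i) (Q j) * (hx * hy))|
      ≤ (m:ℝ) * ((n:ℝ) * (M * hx^2 * hy / 4 + M * hx * hy^2 / 4)) := by
    refine le_trans (Finset.abs_sum_le_sum_abs _ _) ?_
    have h4 : ∀ i ∈ Finset.range m,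
        |∑ j ∈ Finset.range n,
          ((∫ x in X i..X (i+1), ∫ y in Y j..Y (j+1), f x y) - f (P i) (Q j) * (hx * hy))|
        ≤ (n:ℝ) * (M * hx^2 * hy / 4 + M * hx * hy^2 / 4) := by
      intro i hi
      rw [Finset.mem_range] at hi
      refine le_trans (Finset.abs_sum_le_sum_abs _ _) ?_
      have h5 : ∀ j ∈ Finset.range n,
          |(∫ x in X i..X (i+1), ∫ y in Y j..Y (j+1), f x y) - f (P i) (Q j) * (hx * hy)|
          ≤ M * hx^2 * hy / 4 + M * hx * hy^2 / 4 :=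
        fun j hj => hcell i hi j (Finset.mem_range.1 hj)
      calc (∑ j ∈ Finset.range n,
            |(∫ x in X i..X (i+1), ∫ y in Y j..Y (j+1), f x y) - f (P i) (Q j) * (hx * hy)|)
          ≤ ∑ _j ∈ Finset.range n, (M * hx^2 * hy / 4 + M * hx * hy^2 / 4) :=
            Finset.sum_le_sum h5
        _ = (n:ℝ) * (M * hx^2 * hy / 4 + M * hx * hy^2 / 4) := by
            rw [Finset.sum_const, Finset.card_range, nsmul_eq_mul]
    calc (∑ i ∈ Finset.range m,
          |∑ j ∈ Finset.range n,
            ((∫ x in X i..X (i+1), ∫ y in Y j..Y (j+1), f x y) - f (P i) (Q j) * (hx * hy))|)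
        ≤ ∑ _i ∈ Finset.range m, (n:ℝ) * (M * hx^2 * hy / 4 + M * hx * hy^2 / 4) :=
          Finset.sum_le_sum h4
      _ = (m:ℝ) * ((n:ℝ) * (M * hx^2 * hy / 4 + M * hx * hy^2 / 4)) := by
          rw [Finset.sum_const, Finset.card_range, nsmul_eq_mul]
  have heqf : (m:ℝ) * ((n:ℝ) * (M * hx^2 * hy / 4 + M * hx * hy^2 / 4))
      = M * (b - a)^2 * (d - c) / (4 * m) + M * (b - a) * (d - c)^2 / (4 * n) := by
    rw [hhx, hhy]
    exact heqf_aux (b - a) (d - c) M m n hm' hn'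
  have hNterm : 0 ≤ N * (b - a)^2 * (d - c)^2 / (4 * m * n) :=
    div_nonneg (mul_nonneg (mul_nonneg hN0 (sq_nonneg _)) (sq_nonneg _)) (by positivity)
  linarith
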